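/- Let H be a finite set of isotone (order-preserving) mappings from C to C, where C ⊆ (ℝ≥0 ∪ {+∞})^I is closed under componentwise minimum, with I a finite index set. Consider an execution (h_k, s_k, t_k, u_k)_{k≥1} satisfying: h_k ∈ H; 0 < s_k ≤ t_k < u_k; u_{k+1} > u_k; intervals (t_k, u_k] are pairwise disjoint; each h ∈ H occurs infinitely often; and s_k → ∞. Define the memory state x(t) as the piecewise-constant right-continuous function with x(0)=x_0 that jumps at times u_k to x(u_k) = min(x(t_k), h_k(x(s_k))) (componentwise minimum). Then lim_{t→∞} x(t) exists in (ℝ≥0 ∪ {+∞})^I. -/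

import Mathlib

open scoped ENNReal

/-- An execution of a finite set of refinement mappings with a shared memory.
`h k` is the mapping used by the `k`-th completed refinement, `s k` its reading time,
`t k` its locking time and `u k` its unlocking (writing) time.  `x` is the state of
the shared memory over time, with `x 0 = x₀`, piecewise constant between writes, and
updated at each write time `u k` to `min (x (t k)) (h k (x (s k)))` componentwise. -/
structure Execution (I : Type*) (H : Set ((I → ℝ≥0∞) → (I → ℝ≥0∞)))
    (x₀ : I → ℝ≥0∞) where
  h : ℕ → (I → ℝ≥0∞) → (I → ℝ≥0∞)
  s : ℕ → ℝ
  t : ℕ → ℝ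
  u : ℕ → ℝ
  x : ℝ → I → ℝ≥0∞
  /-- (C1) each refinement belongs to `H` -/
  hH : ∀ k, h k ∈ H
  /-- (C2) `0 < s_k ≤ t_k < u_k` -/
  hst : ∀ k, 0 < s k ∧ s k ≤ t k ∧ t k < u k
  /-- (C3) the write times are strictly increasing -/
  hu : StrictMono u
  /-- (C4) the intervals `(t_k, u_k]` are pairwise disjoint -/
  hdisj : ∀ k k', k ≠ k' → Disjoint (Set.Ioc (t k) (u k)) (Set.Ioc (t k') (u k'))
  /-- (C5) every mapping of `H` is executed infinitely often -/
  hinf : ∀ g ∈ H, ∀ N : ℕ, ∃ k ≥ N, h k = g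
  /-- (C6) the reading times tend to infinity -/
  hs : Filter.Tendsto s Filter.atTop Filter.atTop
  /-- the memory starts at `x₀` -/
  hx0 : x 0 = x₀
  /-- the memory is constant on intervals containing no write time -/
  hconst : ∀ τ τ' : ℝ, 0 ≤ τ → τ ≤ τ' →
    (∀ k, ¬ (τ < u k ∧ u k ≤ τ')) → x τ' = x τ
  /-- the update rule at write times: componentwise minimum with the computed value -/
  hjump : ∀ k, x (u k) = x (t k) ⊓ (h k) (x (s k))

/-- Lemma 2 (first part): for any execution of a finite set of isotone mappings on a
subset `C` of `(ℝ≥0 ∪ {+∞})^I` closed under componentwise minimum, the memory state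
`x(t)` converges as `t → ∞`. -/
theorem memory_state_converges {I : Type*} [Fintype I]
    (C : Set (I → ℝ≥0∞)) (hCmin : ∀ x ∈ C, ∀ y ∈ C, x ⊓ y ∈ C)
    (H : Set ((I → ℝ≥0∞) → (I → ℝ≥0∞))) (hHfin : H.Finite)
    (hiso : ∀ h ∈ H, ∀ x ∈ C, ∀ y ∈ C, x ≤ y → h x ≤ h y)
    (hmap : ∀ h ∈ H, ∀ x ∈ C, h x ∈ C)
    (x₀ : I → ℝ≥0∞) (hx₀ : x₀ ∈ C)
    (E : Execution I H x₀) :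
    ∃ L : I → ℝ≥0∞, Filter.Tendsto E.x Filter.atTop (nhds L) := by
  classical
  -- the write times tend to infinity
  have huinf : Filter.Tendsto E.u Filter.atTop Filter.atTop :=
    Filter.tendsto_atTop_mono
      (fun k => le_of_lt (lt_of_le_of_lt (E.hst k).2.1 (E.hst k).2.2)) E.hs
  have hfin : ∀ τ' : ℝ, {k : ℕ | E.u k ≤ τ'}.Finite := by
    intro τ'
    obtain ⟨N, hN⟩ := Filter.eventually_atTop.1 (Filter.tendsto_atTop.1 huinf (τ' + 1))
    apply Set.Finite.subset (Set.finite_Iio N)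
    intro k hk
    by_contra hlt
    have hkN : N ≤ k := le_of_not_gt hlt
    have := hN k hkN
    simp only [Set.mem_setOf_eq] at hk
    linarith
  -- main monotonicity claim, by strong induction on the number of writes in (τ, τ']
  have key : ∀ n : ℕ, ∀ τ τ' : ℝ, 0 ≤ τ → τ ≤ τ' →
      {k | τ < E.u k ∧ E.u k ≤ τ'}.ncard ≤ n → E.x τ' ≤ E.x τ := by
    intro n
    induction n with
    | zero =>
      intro τ τ' h0 hle hcard
      have hKfin : {k | τ < E.u k ∧ E.u k ≤ τ'}.Finite :=
        (hfin τ').subset (fun k hk => hk.2)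
      have hempty : {k | τ < E.u k ∧ E.u k ≤ τ'} = ∅ :=
        (Set.ncard_eq_zero hKfin).1 (Nat.le_zero.1 hcard)
      rw [E.hconst τ τ' h0 hle (fun k hk => by
        have : k ∈ ({k | τ < E.u k ∧ E.u k ≤ τ'} : Set ℕ) := hk
        rw [hempty] at this; exact this)]
    | succ n ih =>
      intro τ τ' h0 hle hcard
      set K : Set ℕ := {k | τ < E.u k ∧ E.u k ≤ τ'} with hKdef
      have hKfin : K.Finite := (hfin τ').subset (fun k hk => hk.2)
      rcases Set.eq_empty_or_nonempty K with hK | hK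
      · rw [E.hconst τ τ' h0 hle (fun k hk => by
          have : k ∈ K := hk
          rw [hK] at this; exact this)]
      · obtain ⟨k, hkK, hkmax⟩ := hKfin.exists_maximalFor E.u K hK
        have hτuk : τ < E.u k := hkK.1
        have hukτ' : E.u k ≤ τ' := hkK.2
        have htk : 0 < E.t k := lt_of_lt_of_le (E.hst k).1 (E.hst k).2.1
        have htuk : E.t k < E.u k := (E.hst k).2.2
        -- no write in (u k, τ']
        have step1 : E.x τ' = E.x (E.u k) := by
          apply E.hconst (E.u k) τ' (le_of_lt (lt_of_le_of_lt h0 hτuk)) hukτ'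
          intro k' ⟨h1, h2⟩
          have hk'K : k' ∈ K := ⟨lt_trans hτuk h1, h2⟩
          exact absurd (hkmax hk'K (le_of_lt h1)) (not_le.2 h1)
        have step2 : E.x (E.u k) ≤ E.x (E.t k) := by
          rw [E.hjump k]; exact inf_le_left
        have step3 : E.x (E.t k) ≤ E.x τ := by
          rcases lt_or_ge (E.t k) τ with hcase | hcase
          · -- no write in (t k, τ]
            have : E.x τ = E.x (E.t k) := by
              apply E.hconst (E.t k) τ (le_of_lt htk) (le_of_lt hcase)
              intro k' ⟨h1, h2⟩
              rcases eq_or_ne k' k with rfl | hne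
              · exact absurd h2 (not_le.2 hτuk)
              · have hd := E.hdisj k k' (Ne.symm hne)
                have hm1 : E.u k' ∈ Set.Ioc (E.t k) (E.u k) :=
                  ⟨h1, le_of_lt (lt_of_le_of_lt h2 hτuk)⟩
                have hm2 : E.u k' ∈ Set.Ioc (E.t k') (E.u k') :=
                  ⟨(E.hst k').2.2, le_refl _⟩
                exact Set.disjoint_left.1 hd hm1 hm2
            exact le_of_eq this.symm
          · -- induct on (τ, t k]
            apply ih τ (E.t k) h0 hcase
            have hsub : {k' | τ < E.u k' ∧ E.u k' ≤ E.t k} ⊆ K \ {k} := by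
              intro k' ⟨h1, h2⟩
              refine ⟨⟨h1, le_trans h2 (le_trans (le_of_lt htuk) hukτ')⟩, ?_⟩
              intro hk'
              rw [Set.mem_singleton_iff] at hk'
              subst hk'
              exact absurd h2 (not_le.2 htuk)
            calc {k' | τ < E.u k' ∧ E.u k' ≤ E.t k}.ncard
                ≤ (K \ {k}).ncard := Set.ncard_le_ncard hsub hKfin.diff
              _ = K.ncard - 1 := Set.ncard_diff_singleton_of_mem hkK
              _ ≤ n := by omega
        exact step1 ▸ (le_trans step2 step3)
  have mono : ∀ τ τ' : ℝ, 0 ≤ τ → τ ≤ τ' → E.x τ' ≤ E.x τ :=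
    fun τ τ' h0 hle => key _ τ τ' h0 hle le_rfl
  -- the regularized function, antitone on all of ℝ
  set f : ℝ → I → ℝ≥0∞ := fun τ => E.x (max τ 0) with hf
  have hanti : ∀ i, Antitone (fun τ => f τ i) := by
    intro i τ τ' hle
    exact mono (max τ 0) (max τ' 0) (le_max_right _ _)
      (max_le_max hle le_rfl) i
  refine ⟨fun i => ⨅ τ : ℝ, f τ i, ?_⟩
  have hcong : f =ᶠ[Filter.atTop] E.x := by
    filter_upwards [Filter.eventually_ge_atTop (0 : ℝ)] with τ hτ
    simp [hf, max_eq_left hτ]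
  refine Filter.Tendsto.congr' hcong ?_
  rw [tendsto_pi_nhds]
  intro i
  exact tendsto_atTop_iInf (hanti i)
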